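/- Let m/n ∈ (0,1/2) in lowest terms, and let LFS(m/n) = (0 = u₁/v₁, u₂/v₂, …, u_α/v_α) be the left Farey sequence of m/n (where u_α/v_α = LFP(m/n) and uᵢ/vᵢ = LFP(u_{i+1}/v_{i+1})). Then the set of m/n-admissible integers in {0,…,m-1} has exactly α elements. -/

import Mathlib

/-- The least κ ≥ 0 with r + κm ≡ s (mod n). -/
noncomputable def kappaLeast (n m r s : ℕ) : ℕ :=
  sInf {j : ℕ | ((r + j * m : ℕ) : ZMod n) = (s : ZMod n)}

/-- The orbit segment O_{m/n}[r,s]. -/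
noncomputable def orbSeg (n m r s : ℕ) : Finset (ZMod n) :=
  (Finset.range (kappaLeast n m r s + 1)).image (fun j => ((r + j * m : ℕ) : ZMod n))

/-- k ∈ {0,…,m-1} is m/n-admissible if [k+1,m-1] ∩ O_{m/n}[k,0] = ∅. -/
def IsAdmissible (m n k : ℕ) : Prop :=
  ∀ r : ℕ, k + 1 ≤ r → r ≤ m - 1 → ((r : ZMod n) ∉ orbSeg n m k 0)


-- Lattice case analysis lemma 1: minimum property.
lemma latticeL1 (mz nz Ui Vi Ui1 Vi1 w q c : ℤ)
    (hdet : Ui1 * Vi - Vi1 * Ui = 1)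
    (hD : mz * w - nz * q = c)
    (hVi : 1 ≤ Vi) (hVV : Vi < Vi1)
    (hDi1 : 1 ≤ mz * Vi1 - nz * Ui1)
    (hDD : mz * Vi1 - nz * Ui1 ≤ mz * Vi - nz * Ui)
    (hw1 : 1 ≤ w) (hw2 : w ≤ Vi1) (hc : 1 ≤ c) :
    mz * Vi1 - nz * Ui1 ≤ c := by
  set Di : ℤ := mz * Vi - nz * Ui with hDi_def
  set Di1 : ℤ := mz * Vi1 - nz * Ui1 with hDi1_def
  set a : ℤ := w * Ui1 - q * Vi1 with ha_def
  set b : ℤ := q * Vi - w * Ui with hb_def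
  have hwi : a * Vi + b * Vi1 = w := by
    simp only [ha_def, hb_def]; linear_combination w * hdet
  have hqi : a * Ui + b * Ui1 = q := by
    simp only [ha_def, hb_def]; linear_combination q * hdet
  have hci : a * Di + b * Di1 = c := by
    simp only [hDi_def, hDi1_def]
    linear_combination mz * hwi - nz * hqi + hD
  have hDi0 : 1 ≤ Di := le_trans hDi1 hDD
  rcases lt_trichotomy a 0 with ha | ha | ha
  · -- a ≤ -1 : contradiction
    exfalso
    have hb1 : 1 ≤ b := by nlinarith
    have hba : b ≤ -a := by nlinarith
    nlinarith
  · -- a = 0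
    have hb1 : 1 ≤ b := by nlinarith [ha ▸ hwi]
    nlinarith [ha ▸ hci]
  · -- a ≥ 1
    have ha1 : 1 ≤ a := ha
    rcases lt_trichotomy b 0 with hb | hb | hb
    · have hab : 1 - b ≤ a := by nlinarith
      nlinarith
    · nlinarith [hb ▸ hci]
    · exfalso; nlinarith


-- Lattice case analysis lemma 2: gap property (no small value strictly between Vi and Vi1).
lemma latticeL2 (mz nz Ui Vi Ui1 Vi1 w q c : ℤ)
    (hdet : Ui1 * Vi - Vi1 * Ui = 1)
    (hD : mz * w - nz * q = c)
    (hVi : 1 ≤ Vi)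
    (hDi : 1 ≤ mz * Vi - nz * Ui)
    (hDi1 : 0 ≤ mz * Vi1 - nz * Ui1)
    (hDD : mz * Vi1 - nz * Ui1 < mz * Vi - nz * Ui)
    (hw1 : Vi < w) (hw2 : w < Vi1) (hc : 1 ≤ c) :
    mz * Vi - nz * Ui < c := by
  set Di : ℤ := mz * Vi - nz * Ui with hDi_def
  set Di1 : ℤ := mz * Vi1 - nz * Ui1 with hDi1_def
  set a : ℤ := w * Ui1 - q * Vi1 with ha_def
  set b : ℤ := q * Vi - w * Ui with hb_def
  have hwi : a * Vi + b * Vi1 = w := by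
    simp only [ha_def, hb_def]; linear_combination w * hdet
  have hqi : a * Ui + b * Ui1 = q := by
    simp only [ha_def, hb_def]; linear_combination q * hdet
  have hci : a * Di + b * Di1 = c := by
    simp only [hDi_def, hDi1_def]
    linear_combination mz * hwi - nz * hqi + hD
  have hVV : Vi < Vi1 := lt_trans hw1 hw2
  have hw1' : 1 ≤ w := by linarith
  rcases lt_trichotomy a 0 with ha | ha | ha
  · -- a ≤ -1 : contradiction
    exfalso
    have hb1 : 1 ≤ b := by nlinarith
    have hba : b ≤ -a := by nlinarith
    nlinarith
  · -- a = 0 : contradiction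
    exfalso
    rcases lt_trichotomy b 0 with hb | hb | hb
    · nlinarith
    · nlinarith
    · nlinarith
  · -- a ≥ 1
    have ha1 : 1 ≤ a := ha
    rcases lt_trichotomy b 0 with hb | hb | hb
    · have hab : 1 - b ≤ a := by nlinarith
      nlinarith
    · -- b = 0 : w = a Vi, w > Vi so a ≥ 2
      have ha2 : 2 ≤ a := by nlinarith
      nlinarith
    · exfalso; nlinarith

lemma mod_eq_of_cast_eq {n a b : ℕ} (hb : b < n) (h : (a : ZMod n) = (b : ZMod n)) :
    a % n = b := by
  have h2 := (ZMod.natCast_eq_natCast_iff a b n).mp h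
  unfold Nat.ModEq at h2
  rwa [Nat.mod_eq_of_lt hb] at h2

lemma kappa_eq (n m k t : ℕ) (hmn : Nat.Coprime m n) (htn : t < n)
    (ht : ((k + t * m : ℕ) : ZMod n) = 0) : kappaLeast n m k 0 = t := by
  have hn : 0 < n := lt_of_le_of_lt (Nat.zero_le t) htn
  haveI : NeZero n := ⟨by omega⟩
  have hmem : t ∈ {j : ℕ | ((k + j * m : ℕ) : ZMod n) = ((0 : ℕ) : ZMod n)} := by
    simpa using ht
  apply le_antisymm
  · exact Nat.sInf_le hmem
  · apply le_csInf ⟨t, hmem⟩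
    intro j hj
    have hj' : ((k + j * m : ℕ) : ZMod n) = ((k + t * m : ℕ) : ZMod n) := by
      simp only [Set.mem_setOf_eq] at hj
      rw [ht, hj, Nat.cast_zero]
    push_cast at hj'
    have hmu : IsUnit ((m : ℕ) : ZMod n) := (ZMod.isUnit_iff_coprime m n).mpr hmn
    have hjt : ((j : ZMod n)) = (t : ZMod n) := by
      have h2 : ((m : ZMod n)) * j = ((m : ZMod n)) * t := by
        rw [mul_comm ((m : ZMod n)) (j : ZMod n), mul_comm ((m : ZMod n)) (t : ZMod n)]
        exact add_left_cancel hj'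
      exact hmu.mul_left_cancel h2
    have h3 := (ZMod.natCast_eq_natCast_iff j t n).mp hjt
    unfold Nat.ModEq at h3
    rw [Nat.mod_eq_of_lt htn] at h3
    exact h3 ▸ Nat.mod_le j n

lemma mem_orbSeg_iff {n m k : ℕ} {x : ZMod n} :
    x ∈ orbSeg n m k 0 ↔ ∃ t ≤ kappaLeast n m k 0, ((k + t * m : ℕ) : ZMod n) = x := by
  unfold orbSeg
  simp only [Finset.mem_image, Finset.mem_range, Nat.lt_succ_iff]

lemma kappa_spec (n m k t : ℕ) (ht : ((k + t * m : ℕ) : ZMod n) = 0) :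
    ((k + (kappaLeast n m k 0) * m : ℕ) : ZMod n) = 0 ∧ kappaLeast n m k 0 ≤ t := by
  have hmem : t ∈ {j : ℕ | ((k + j * m : ℕ) : ZMod n) = ((0 : ℕ) : ZMod n)} := by
    simp only [Set.mem_setOf_eq, Nat.cast_zero]; exact ht
  have h1 : kappaLeast n m k 0 ∈ {j : ℕ | ((k + j * m : ℕ) : ZMod n) = ((0 : ℕ) : ZMod n)} :=
    Nat.sInf_mem ⟨t, hmem⟩
  simp only [Set.mem_setOf_eq, Nat.cast_zero] at h1
  exact ⟨h1, Nat.sInf_le hmem⟩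


-- V is monotone along the chain
lemma Vmono (α : ℕ) (V : ℕ → ℕ)
    (hVlt : ∀ i, 1 ≤ i → i ≤ α → V i < V (i + 1)) :
    ∀ i j, 1 ≤ i → i ≤ j → j ≤ α + 1 → V i ≤ V j ∧ (i < j → V i < V j) := by
  intro i j hi hij hj
  induction j with
  | zero => omega
  | succ p ih =>
    rcases Nat.eq_or_lt_of_le hij with h | h
    · subst h; exact ⟨le_refl _, fun h' => absurd h' (lt_irrefl _)⟩
    · have hip : i ≤ p := by omega
      have hpa : p ≤ α + 1 := by omega
      have hpα : p ≤ α := by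
        by_contra hc
        have : p = α + 1 := by omega
        omega
      have hp1 : 1 ≤ p := le_trans hi hip
      obtain ⟨h1, _⟩ := ih hip hpa
      have h2 := hVlt p hp1 hpα
      exact ⟨by omega, fun _ => by omega⟩

-- strict decrease of D along the chain (the key Farey-chain lemma)
lemma Ddec (m n α : ℕ) (U V : ℕ → ℕ) (hα : 1 ≤ α)
    (hdet : ∀ i, 1 ≤ i → i ≤ α → (U (i+1) : ℤ) * V i - (V (i+1) : ℤ) * U i = 1)
    (hVlt : ∀ i, 1 ≤ i → i ≤ α → V i < V (i + 1))
    (hVpos : ∀ j, 1 ≤ j → j ≤ α + 1 → 1 ≤ V j)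
    (hDa : (m : ℤ) * V α - (n : ℤ) * U α = 1)
    (hDa1 : (m : ℤ) * V (α+1) - (n : ℤ) * U (α+1) = 0) :
    ∀ i, 1 ≤ i → i ≤ α →
      ((m : ℤ) * V (i+1) - (n : ℤ) * U (i+1)) < (m : ℤ) * V i - (n : ℤ) * U i ∧
      0 ≤ (m : ℤ) * V (i+1) - (n : ℤ) * U (i+1) := by
  have key : ∀ s i, i + s = α → 1 ≤ i →
      ((m : ℤ) * V (i+1) - (n : ℤ) * U (i+1)) < (m : ℤ) * V i - (n : ℤ) * U i ∧
      0 ≤ (m : ℤ) * V (i+1) - (n : ℤ) * U (i+1) := by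
    intro s
    induction s with
    | zero =>
      intro i hi h1
      have : i = α := by omega
      subst this
      rw [hDa, hDa1]
      norm_num
    | succ p ih =>
      intro i hi h1
      obtain ⟨ih1, ih2⟩ := ih (i+1) (by omega) (by omega)
      have hDi1pos : (1 : ℤ) ≤ (m : ℤ) * V (i+1) - (n : ℤ) * U (i+1) := by linarith
      have hA := hdet i h1 (by omega)
      have hB := hdet (i+1) (by omega) (by omega)
      have hcp : IsCoprime ((V (i+1) : ℤ)) ((U (i+1) : ℤ)) :=
        ⟨-(U i : ℤ), (V i : ℤ), by linear_combination hA⟩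
      set Q : ℤ := ((V (i+2) : ℤ) - V (i+1)) - ((V (i+1) : ℤ) - V i) with hQ
      set P : ℤ := ((U (i+2) : ℤ) - U (i+1)) - ((U (i+1) : ℤ) - U i) with hP
      have hPQ : P * (V (i+1) : ℤ) = Q * (U (i+1) : ℤ) := by
        simp only [hP, hQ]; linear_combination hB - hA
      have hdvd : (V (i+1) : ℤ) ∣ Q :=
        hcp.dvd_of_dvd_mul_right ⟨P, by linear_combination - hPQ⟩
      obtain ⟨t, ht⟩ := hdvd
      have hV0 : (V (i+1) : ℤ) ≠ 0 := by
        have h4 := hVpos (i+1) (by omega) (by omega)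
        exact Int.natCast_ne_zero.mpr (by omega)
      have hPt : P = t * (U (i+1) : ℤ) := by
        have h2 : P * (V (i+1) : ℤ) = (t * (U (i+1) : ℤ)) * (V (i+1) : ℤ) := by
          rw [hPQ, ht]; ring
        exact mul_right_cancel₀ hV0 h2
      have ht0 : 0 ≤ t := by
        have h1' := hVlt (i+1) (by omega) (by omega)
        have h3' := hVpos i h1 (by omega)
        have h4' := hVpos (i+1) (by omega) (by omega)
        by_contra hc
        push_neg at hc
        have hc' : t ≤ -1 := by omega
        have hb0 : (0 : ℤ) ≤ (V (i+1) : ℤ) := by positivity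
        have hprod : (V (i+1) : ℤ) * t ≤ (V (i+1) : ℤ) * (-1) :=
          mul_le_mul_of_nonneg_left hc' hb0
        have hQval : ((V (i+2)) : ℤ) - (V (i+1)) - ((V (i+1) : ℤ) - V i) = (V (i+1) : ℤ) * t := by
          rw [← hQ]; exact ht
        have h1'' : V (i+1) < V (i+2) := h1'
        have hb1 : (1 : ℤ) ≤ (V (i+2) : ℤ) - (V (i+1) : ℤ) := by omega
        have hb2 : (1 : ℤ) ≤ (V i : ℤ) := by exact_mod_cast h3'
        have hb3 : (1 : ℤ) ≤ (V (i+1) : ℤ) := by exact_mod_cast h4'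
        linarith
      have hkey : ((m : ℤ) * V i - (n : ℤ) * U i) - ((m : ℤ) * V (i+1) - (n : ℤ) * U (i+1))
          = (((m : ℤ) * V (i+1) - (n : ℤ) * U (i+1)) - ((m : ℤ) * V (i+2) - (n : ℤ) * U (i+2)))
            + t * ((m : ℤ) * V (i+1) - (n : ℤ) * U (i+1)) := by
        have hQ' : ((V (i+2) : ℤ) - V (i+1)) - ((V (i+1) : ℤ) - V i) = (V (i+1) : ℤ) * t := by
          rw [← hQ]; exact ht
        have hP' : ((U (i+2) : ℤ) - U (i+1)) - ((U (i+1) : ℤ) - U i) = t * (U (i+1) : ℤ) := by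
          rw [← hP]; exact hPt
        linear_combination (m : ℤ) * hQ' - (n : ℤ) * hP'
      have hprod2 : 0 ≤ t * ((m : ℤ) * V (i+1) - (n : ℤ) * U (i+1)) :=
        mul_nonneg ht0 (by linarith)
      exact ⟨by linarith, by linarith⟩
  intro i h1 h2
  exact key (α - i) i (by omega) h1

lemma natModPos (m n w : ℕ) (hmn : Nat.Coprime m n) (hw1 : 1 ≤ w) (hwn : w < n) :
    1 ≤ (m * w) % n := by
  rcases Nat.eq_zero_or_pos ((m * w) % n) with h0 | h1
  · exfalso
    have hdvd : n ∣ m * w := Nat.dvd_of_mod_eq_zero h0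
    have hdvd' : n ∣ w * m := by rwa [mul_comm] at hdvd
    have : n ∣ w := (Nat.Coprime.dvd_of_dvd_mul_right (hmn.symm)) hdvd'
    have := Nat.le_of_dvd (by omega) this
    omega
  · exact h1

lemma castDiv (m n w : ℕ) (hn : 0 < n) :
    (m:ℤ) * (w:ℤ) - (n:ℤ) * (((m*w)/n : ℕ) : ℤ) = (((m*w) % n : ℕ) : ℤ) := by
  have hdiv := Nat.div_add_mod (m * w) n
  push_cast
  push_cast at hdiv
  nlinarith [hdiv]

lemma minPropLemma (m n α : ℕ) (U V : ℕ → ℕ)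
    (hmn : Nat.Coprime m n) (hmlt : m < n) (hn : 0 < n)
    (hdet : ∀ i, 1 ≤ i → i ≤ α → (U (i+1) : ℤ) * V i - (V (i+1) : ℤ) * U i = 1)
    (hV1 : V 1 = 1) (hU1 : U 1 = 0)
    (hVpos : ∀ j, 1 ≤ j → j ≤ α + 1 → 1 ≤ V j)
    (hVlt : ∀ i, 1 ≤ i → i ≤ α → V i < V (i+1))
    (hVn : ∀ j, 1 ≤ j → j ≤ α → V j < n)
    (hDpos : ∀ j, 1 ≤ j → j ≤ α → 1 ≤ (m:ℤ) * V j - (n:ℤ) * U j)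
    (hDmon : ∀ i j, 1 ≤ i → i ≤ j → j ≤ α →
      ((m:ℤ) * V j - (n:ℤ) * U j) ≤ (m:ℤ) * V i - (n:ℤ) * U i) :
    ∀ j, 1 ≤ j → j ≤ α → ∀ w : ℕ, 1 ≤ w → w ≤ V j →
      (m:ℤ) * V j - (n:ℤ) * U j ≤ (((m * w) % n : ℕ) : ℤ) := by
  intro j hj1 hj2 w hw1 hw2
  rcases Nat.eq_or_lt_of_le hj1 with hj | hj
  · -- j = 1
    subst hj
    have hw : w = 1 := by rw [hV1] at hw2; omega
    subst hw
    rw [hV1, hU1]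
    rw [mul_one, Nat.mod_eq_of_lt hmlt]
    push_cast
    omega
  · -- j ≥ 2
    obtain ⟨i, rfl⟩ : ∃ i, j = i + 1 := ⟨j - 1, by omega⟩
    have hi1 : 1 ≤ i := by omega
    have hia : i ≤ α := by omega
    have hc : 1 ≤ (m * w) % n := natModPos m n w hmn hw1 (by
      have := hVn (i+1) (by omega) hj2; omega)
    have hVi : (1:ℤ) ≤ (V i : ℤ) := by
      have := hVpos i (by omega) (by omega); omega
    have hVV : ((V i : ℕ) : ℤ) < ((V (i+1) : ℕ) : ℤ) := by
      have := hVlt i hi1 hia; omega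
    exact latticeL1 m n (U i) (V i) (U (i+1)) (V (i+1)) w ((m*w)/n : ℕ) (((m*w) % n : ℕ))
      (hdet i hi1 hia) (castDiv m n w hn) hVi hVV
      (hDpos (i+1) (by omega) hj2) (hDmon i (i+1) hi1 (by omega) hj2)
      (by exact_mod_cast hw1) (by exact_mod_cast hw2) (by exact_mod_cast hc)

lemma gapPropLemma (m n α : ℕ) (U V : ℕ → ℕ)
    (hmn : Nat.Coprime m n) (hn : 0 < n)
    (hdet : ∀ i, 1 ≤ i → i ≤ α → (U (i+1) : ℤ) * V i - (V (i+1) : ℤ) * U i = 1)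
    (hVpos : ∀ j, 1 ≤ j → j ≤ α + 1 → 1 ≤ V j)
    (hVn1 : ∀ j, 1 ≤ j → j ≤ α + 1 → V j ≤ n)
    (hDpos : ∀ j, 1 ≤ j → j ≤ α → 1 ≤ (m:ℤ) * V j - (n:ℤ) * U j)
    (hDnn : ∀ j, 1 ≤ j → j ≤ α + 1 → 0 ≤ (m:ℤ) * V j - (n:ℤ) * U j)
    (hDstrict : ∀ i, 1 ≤ i → i ≤ α →
      ((m:ℤ) * V (i+1) - (n:ℤ) * U (i+1)) < (m:ℤ) * V i - (n:ℤ) * U i) :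
    ∀ j, 1 ≤ j → j ≤ α → ∀ w : ℕ, V j < w → w < V (j+1) →
      (m:ℤ) * V j - (n:ℤ) * U j < (((m * w) % n : ℕ) : ℤ) := by
  intro j hj1 hj2 w hw1 hw2
  have hVj : 1 ≤ V j := hVpos j hj1 (by omega)
  have hc : 1 ≤ (m * w) % n := natModPos m n w hmn (by omega) (by
    have := hVn1 (j+1) (by omega) (by omega); omega)
  exact latticeL2 m n (U j) (V j) (U (j+1)) (V (j+1)) w ((m*w)/n : ℕ) (((m*w) % n : ℕ))
    (hdet j hj1 hj2) (castDiv m n w hn)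
    (by exact_mod_cast hVj)
    (hDpos j hj1 hj2) (hDnn (j+1) (by omega) (by omega)) (hDstrict j hj1 hj2)
    (by exact_mod_cast hw1) (by exact_mod_cast hw2) (by exact_mod_cast hc)

/-- if LFS(m/n) = (0 = u₁/v₁, …, u_α/v_α), then there are exactly
α many m/n-admissible integers in {0,…,m-1}. -/
theorem card_admissible_eq_lfs_length (m n : ℕ)
    (hm : 0 < m) (h2 : 2 * m < n) (hmn : Nat.Coprime m n)
    (α : ℕ) (hα : 1 ≤ α) (u v : ℕ → ℕ)
    (hu1 : u 1 = 0) (hv1 : v 1 = 1)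
    (hcop : ∀ i, 1 ≤ i → i ≤ α → Nat.Coprime (u i) (v i))
    (hlast : (m : ℤ) * v α - (n : ℤ) * u α = 1) (hvα : v α < n)
    (hstep : ∀ i, 1 ≤ i → i < α →
      (u (i + 1) : ℤ) * v i - (v (i + 1) : ℤ) * u i = 1 ∧ v i < v (i + 1)) :
    (@Finset.filter ℕ (fun k => IsAdmissible m n k) (Classical.decPred _) (Finset.range m)).card = α := by
  have hn : 0 < n := by omega
  have hmltn : m < n := by omega
  haveI : NeZero n := ⟨by omega⟩
  set UN : ℕ → ℕ := fun j => if j = α + 1 then m else u j with hUN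
  set VN : ℕ → ℕ := fun j => if j = α + 1 then n else v j with hVN
  have hUNj : ∀ j, j ≤ α → UN j = u j := by
    intro j hj; simp only [hUN]; rw [if_neg (by omega)]
  have hVNj : ∀ j, j ≤ α → VN j = v j := by
    intro j hj; simp only [hVN]; rw [if_neg (by omega)]
  have hUNa1 : UN (α+1) = m := by simp [hUN]
  have hVNa1 : VN (α+1) = n := by simp [hVN]
  have hUN1 : UN 1 = 0 := by rw [hUNj 1 hα, hu1]
  have hVN1 : VN 1 = 1 := by rw [hVNj 1 hα, hv1]
  have hdet : ∀ i, 1 ≤ i → i ≤ α → (UN (i+1) : ℤ) * VN i - (VN (i+1) : ℤ) * UN i = 1 := by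
    intro i h1 h3
    rcases Nat.eq_or_lt_of_le h3 with rfl | hlt
    · rw [hUNa1, hVNa1, hUNj _ le_rfl, hVNj _ le_rfl]
      linear_combination hlast
    · rw [hUNj _ (by omega), hVNj _ (by omega), hUNj _ (by omega), hVNj _ (by omega)]
      exact (hstep i h1 hlt).1
  have hVlt : ∀ i, 1 ≤ i → i ≤ α → VN i < VN (i+1) := by
    intro i h1 h3
    rcases Nat.eq_or_lt_of_le h3 with rfl | hlt
    · rw [hVNa1, hVNj _ le_rfl]; exact hvα
    · rw [hVNj _ (by omega), hVNj _ (by omega)]; exact (hstep i h1 hlt).2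
  have hVm := Vmono α VN hVlt
  have hVpos : ∀ j, 1 ≤ j → j ≤ α + 1 → 1 ≤ VN j := by
    intro j h1 h3
    have h4 := (hVm 1 j le_rfl h1 h3).1
    rw [hVN1] at h4; exact h4
  have hVlen : ∀ j, 1 ≤ j → j ≤ α + 1 → VN j ≤ n := by
    intro j h1 h3
    have h4 := (hVm j (α+1) h1 h3 le_rfl).1
    rwa [hVNa1] at h4
  have hVltn : ∀ j, 1 ≤ j → j ≤ α → VN j < n := by
    intro j h1 h3
    have h4 := (hVm j α h1 h3 (by omega)).1
    have h5 : VN α < n := by rw [hVNj _ le_rfl]; exact hvα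
    omega
  have hDa : (m:ℤ) * VN α - (n:ℤ) * UN α = 1 := by
    rw [hUNj _ le_rfl, hVNj _ le_rfl]; exact hlast
  have hDa1 : (m:ℤ) * VN (α+1) - (n:ℤ) * UN (α+1) = 0 := by
    rw [hUNa1, hVNa1]; ring
  have hDd := Ddec m n α UN VN hα hdet hVlt hVpos hDa hDa1
  have hDmonS : ∀ i j, 1 ≤ i → i ≤ j → j ≤ α + 1 →
      ((m:ℤ) * VN j - (n:ℤ) * UN j) ≤ (m:ℤ) * VN i - (n:ℤ) * UN i ∧
      (i < j → ((m:ℤ) * VN j - (n:ℤ) * UN j) < (m:ℤ) * VN i - (n:ℤ) * UN i) := by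
    intro i j h1 hij hj
    induction j with
    | zero => omega
    | succ p ih =>
      rcases Nat.eq_or_lt_of_le hij with rfl | h
      · exact ⟨le_refl _, fun h' => absurd h' (lt_irrefl _)⟩
      · have hip : i ≤ p := by omega
        obtain ⟨e1, e2⟩ := ih hip (by omega)
        have h3 := (hDd p (by omega) (by omega)).1
        exact ⟨by linarith, fun _ => by linarith⟩
  have hDpos : ∀ j, 1 ≤ j → j ≤ α → 1 ≤ (m:ℤ) * VN j - (n:ℤ) * UN j := by
    intro j h1 h3
    have h4 := (hDd j h1 h3).1
    have h5 := (hDd j h1 h3).2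
    linarith
  have hDnn : ∀ j, 1 ≤ j → j ≤ α + 1 → 0 ≤ (m:ℤ) * VN j - (n:ℤ) * UN j := by
    intro j h1 h3
    rcases Nat.eq_or_lt_of_le h3 with rfl | h
    · exact le_of_eq hDa1.symm
    · exact le_trans zero_le_one (hDpos j h1 (by omega))
  have hDmon : ∀ i j, 1 ≤ i → i ≤ j → j ≤ α →
      ((m:ℤ) * VN j - (n:ℤ) * UN j) ≤ (m:ℤ) * VN i - (n:ℤ) * UN i :=
    fun i j h1 h3 h4 => (hDmonS i j h1 h3 (by omega)).1
  have hD1 : (m:ℤ) * VN 1 - (n:ℤ) * UN 1 = m := by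
    rw [hUN1, hVN1]; push_cast; ring
  have hDm : ∀ j, 1 ≤ j → j ≤ α → (m:ℤ) * VN j - (n:ℤ) * UN j ≤ m := by
    intro j h1 h3
    have h4 := hDmon 1 j le_rfl h1 h3
    rwa [hD1] at h4
  -- the ℕ-identity m * VN j = n * UN j + d
  have hNatId : ∀ j, 1 ≤ j → j ≤ α →
      m * VN j = n * UN j + ((m:ℤ) * VN j - (n:ℤ) * UN j).toNat := by
    intro j h1 h3
    have hdval : ((((m:ℤ) * VN j - (n:ℤ) * UN j).toNat : ℕ) : ℤ)
        = (m:ℤ) * VN j - (n:ℤ) * UN j :=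
      Int.toNat_of_nonneg (by linarith [hDpos j h1 h3])
    have h4 : ((m * VN j : ℕ) : ℤ) = ((n * UN j + ((m:ℤ) * VN j - (n:ℤ) * UN j).toNat : ℕ) : ℤ) := by
      push_cast
      rw [hdval]
      ring
    exact_mod_cast h4
  have hdN : ∀ j, 1 ≤ j → j ≤ α →
      (m * VN j) % n = ((m:ℤ) * VN j - (n:ℤ) * UN j).toNat := by
    intro j h1 h3
    rw [hNatId j h1 h3, Nat.mul_add_mod]
    apply Nat.mod_eq_of_lt
    have h4 := hDm j h1 h3
    have h5 := hDpos j h1 h3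
    omega
  have hminp := minPropLemma m n α UN VN hmn hmltn hn hdet hVN1 hUN1 hVpos hVlt hVltn hDpos hDmon
  have hgap := gapPropLemma m n α UN VN hmn hn hdet hVpos hVlen hDpos hDnn
    (fun i h1 h3 => (hDd i h1 h3).1)
  -- toNat abbrev facts
  have hdpos' : ∀ j, 1 ≤ j → j ≤ α → 1 ≤ ((m:ℤ) * VN j - (n:ℤ) * UN j).toNat := by
    intro j h1 h3; have := hDpos j h1 h3; omega
  have hdm' : ∀ j, 1 ≤ j → j ≤ α → ((m:ℤ) * VN j - (n:ℤ) * UN j).toNat ≤ m := by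
    intro j h1 h3; have := hDm j h1 h3; have := hDpos j h1 h3; omega
  -- FORWARD
  have forward : ∀ j, 1 ≤ j → j ≤ α →
      (m - ((m:ℤ) * VN j - (n:ℤ) * UN j).toNat) ∈ Finset.range m ∧
      IsAdmissible m n (m - ((m:ℤ) * VN j - (n:ℤ) * UN j).toNat) := by
    intro j h1 h3
    set d := ((m:ℤ) * VN j - (n:ℤ) * UN j).toNat with hd
    have hd1 : 1 ≤ d := hdpos' j h1 h3
    have hdm : d ≤ m := hdm' j h1 h3
    have hdval : ((d:ℕ) : ℤ) = (m:ℤ) * VN j - (n:ℤ) * UN j :=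
      Int.toNat_of_nonneg (by linarith [hDpos j h1 h3])
    set k := m - d with hk
    refine ⟨Finset.mem_range.mpr (by omega), ?_⟩
    have hNat : m * VN j = n * UN j + d := hNatId j h1 h3
    have hVj1 : 1 ≤ VN j := hVpos j h1 (by omega)
    have hVjn : VN j < n := hVltn j h1 h3
    have hkapNat : k + (VN j - 1) * m = n * UN j := by
      have e1 : (VN j - 1) * m = VN j * m - m := by rw [Nat.sub_mul, one_mul]
      have e2 : m ≤ VN j * m := Nat.le_mul_of_pos_left m (by omega)
      have e3 : VN j * m = m * VN j := Nat.mul_comm _ _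
      omega
    have hcast0 : ((k + (VN j - 1) * m : ℕ) : ZMod n) = 0 := by
      rw [hkapNat]
      push_cast
      simp [ZMod.natCast_self]
    have hkap : kappaLeast n m k 0 = VN j - 1 :=
      kappa_eq n m k (VN j - 1) hmn (by omega) hcast0
    intro r hr1 hr2 hmem
    obtain ⟨tt, htt, hcastr⟩ := mem_orbSeg_iff.mp hmem
    rw [hkap] at htt
    set s := VN j - 1 - tt with hs
    have hw2 : s + 1 ≤ VN j := by omega
    have hsum : (k + tt * m) + s * m = n * UN j := by
      have e4 : tt * m + s * m = (VN j - 1) * m := by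
        rw [← Nat.add_mul]
        congr 1
        omega
      omega
    have hzero : ((r : ℕ) : ZMod n) + ((s * m : ℕ) : ZMod n) = 0 := by
      rw [← hcastr, ← Nat.cast_add, hsum]
      push_cast
      simp [ZMod.natCast_self]
    have hrm : r ≤ m := by omega
    have hcast2 : ((m * (s+1) : ℕ) : ZMod n) = ((m - r : ℕ) : ZMod n) := by
      push_cast [Nat.cast_sub hrm]
      push_cast at hzero
      linear_combination hzero
    have hmodval : (m * (s+1)) % n = m - r := mod_eq_of_cast_eq (by omega) hcast2
    have hfin := hminp j h1 h3 (s+1) (by omega) hw2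
    rw [hmodval, ← hdval] at hfin
    have hfin' : d ≤ m - r := by exact_mod_cast hfin
    omega

  -- BACKWARD
  have backward : ∀ k, k ∈ Finset.range m → IsAdmissible m n k →
      ∃ j, 1 ≤ j ∧ j ≤ α ∧ k = m - ((m:ℤ) * VN j - (n:ℤ) * UN j).toNat := by
    intro k hkr hadm
    have hkm : k < m := Finset.mem_range.mp hkr
    obtain ⟨t0, ht0n, hcast0⟩ : ∃ t0 : ℕ, t0 < n ∧ ((k + t0 * m : ℕ) : ZMod n) = 0 := by
      refine ⟨((-(k : ZMod n)) * (((ZMod.unitOfCoprime m hmn)⁻¹ : (ZMod n)ˣ) : ZMod n)).val,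
        ZMod.val_lt _, ?_⟩
      push_cast
      rw [ZMod.natCast_val, ZMod.cast_id]
      have hμ : ((ZMod.unitOfCoprime m hmn : (ZMod n)ˣ) : ZMod n) = (m : ZMod n) :=
        ZMod.coe_unitOfCoprime m hmn
      have hinv : (((ZMod.unitOfCoprime m hmn)⁻¹ : (ZMod n)ˣ) : ZMod n) * (m : ZMod n) = 1 := by
        rw [← hμ]
        exact Units.inv_mul _
      linear_combination (-(k : ZMod n)) * hinv
    obtain ⟨hκ0, hκle⟩ := kappa_spec n m k t0 hcast0
    set κ := kappaLeast n m k 0 with hκdef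
    have hκn : κ < n := lt_of_le_of_lt hκle ht0n
    have hκ0' : ((k : ℕ) : ZMod n) + ((κ : ℕ) : ZMod n) * ((m : ℕ) : ZMod n) = 0 := by
      push_cast at hκ0
      exact hκ0
    set v0 := κ + 1 with hv0def
    have hv0n : v0 < n := by
      by_contra hcon
      push_neg at hcon
      have hκval : κ = n - 1 := by omega
      have hkmcast : ((k : ℕ) : ZMod n) = ((m : ℕ) : ZMod n) := by
        have h5 := hκ0'
        rw [hκval, Nat.cast_sub (by omega : 1 ≤ n)] at h5
        simp only [ZMod.natCast_self, Nat.cast_one] at h5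
        linear_combination h5
      have h6 := mod_eq_of_cast_eq hmltn hkmcast
      rw [Nat.mod_eq_of_lt (by omega)] at h6
      omega
    set d0 := m - k with hd0def
    have hd01 : 1 ≤ d0 := by omega
    have hmodcast : ((m * v0 : ℕ) : ZMod n) = ((d0 : ℕ) : ZMod n) := by
      rw [hd0def, hv0def]
      push_cast [Nat.cast_sub (le_of_lt hkm)]
      linear_combination hκ0'
    have hmod0 : (m * v0) % n = d0 := mod_eq_of_cast_eq (by omega) hmodcast
    have hminK : ∀ w : ℕ, 1 ≤ w → w ≤ v0 → d0 ≤ (m * w) % n := by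
      intro w hw1 hw2
      by_contra hcon
      push_neg at hcon
      have hc1 : 1 ≤ (m * w) % n := natModPos m n w hmn hw1 (by omega)
      set c := (m * w) % n with hcdef
      set r := m - c with hrdef
      refine hadm r (by omega) (by omega) ?_
      apply mem_orbSeg_iff.mpr
      refine ⟨v0 - w, by omega, ?_⟩
      have hcc : ((c : ℕ) : ZMod n) = ((m : ℕ) : ZMod n) * ((w : ℕ) : ZMod n) := by
        rw [hcdef, ZMod.natCast_mod]
        push_cast
        ring
      have hrc : ((r : ℕ) : ZMod n) = ((m : ℕ) : ZMod n) - ((c : ℕ) : ZMod n) := by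
        rw [hrdef, Nat.cast_sub (show c ≤ m by omega)]
      push_cast [Nat.cast_sub hw2, Nat.cast_sub (show w ≤ κ + 1 by omega), hv0def]
      rw [hrc]
      push_cast at hcc
      linear_combination hκ0' + hcc
    have hone : (1:ℕ) ∈ Finset.filter (fun j => VN j ≤ v0) (Finset.Icc 1 α) := by
      rw [Finset.mem_filter, Finset.mem_Icc]
      exact ⟨⟨le_rfl, hα⟩, by rw [hVN1]; omega⟩
    set S := Finset.filter (fun j => VN j ≤ v0) (Finset.Icc 1 α) with hSdef
    have hSne : S.Nonempty := ⟨1, hone⟩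
    set j := S.max' hSne with hjdef
    have hjS : j ∈ S := S.max'_mem hSne
    rw [hSdef, Finset.mem_filter, Finset.mem_Icc] at hjS
    obtain ⟨⟨hj1, hj2⟩, hjv⟩ := hjS
    have hjv1 : v0 < VN (j+1) := by
      rcases Nat.eq_or_lt_of_le hj2 with heq | hlt
      · rw [heq, hVNa1]; omega
      · by_contra hcon
        push_neg at hcon
        have hmem2 : j + 1 ∈ S := by
          rw [hSdef, Finset.mem_filter, Finset.mem_Icc]
          exact ⟨⟨by omega, by omega⟩, hcon⟩
        have := S.le_max' (j+1) hmem2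
        omega
    have hveq : VN j = v0 := by
      rcases Nat.eq_or_lt_of_le hjv with h | h
      · exact h
      · exfalso
        have hg := hgap j hj1 hj2 v0 h hjv1
        rw [hmod0] at hg
        have hmp := hminK (VN j) (hVpos j hj1 (by omega)) hjv
        rw [hdN j hj1 hj2] at hmp
        have h5 := hDpos j hj1 hj2
        omega
    refine ⟨j, hj1, hj2, ?_⟩
    have h6 : (m * VN j) % n = d0 := by rw [hveq]; exact hmod0
    rw [hdN j hj1 hj2] at h6
    have h7 := hDpos j hj1 hj2
    omega

  -- ASSEMBLY
  have himage : @Finset.filter ℕ (fun k => IsAdmissible m n k) (Classical.decPred _) (Finset.range m) =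
      (Finset.Icc 1 α).image (fun j => m - ((m:ℤ) * VN j - (n:ℤ) * UN j).toNat) := by
    apply Finset.ext
    intro x
    simp only [Finset.mem_filter, Finset.mem_image, Finset.mem_Icc]
    constructor
    · rintro ⟨hx1, hx2⟩
      obtain ⟨j, h1, h3, h4⟩ := backward x hx1 hx2
      exact ⟨j, ⟨h1, h3⟩, h4.symm⟩
    · rintro ⟨j, ⟨h1, h3⟩, rfl⟩
      exact forward j h1 h3
  rw [himage, Finset.card_image_of_injOn, Nat.card_Icc]
  · omega
  · intro i hi j hj hij
    simp only [Finset.coe_Icc, Set.mem_Icc] at hi hj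
    by_contra hne
    have key : ∀ a b : ℕ, 1 ≤ a → a ≤ b → b ≤ α → a < b →
        m - ((m:ℤ) * VN a - (n:ℤ) * UN a).toNat ≠ m - ((m:ℤ) * VN b - (n:ℤ) * UN b).toNat := by
      intro a b ha1 hab hbα hlt
      have h4 := (hDmonS a b ha1 hab (by omega)).2 hlt
      have h5 := hDpos a ha1 (by omega)
      have h6 := hDpos b (by omega) hbα
      have h7 := hDm a ha1 (by omega)
      have h8 := hDm b (by omega) hbα
      omega
    rcases Nat.lt_or_ge i j with h | h
    · exact key i j hi.1 (le_of_lt h) hj.2 h hij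
    · have h' : j < i := by omega
      exact key j i hj.1 (le_of_lt h') hi.2 h' hij.symm
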